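/- arXiv:1512.08757 — 3 statements merged into one kernel-verified Lean document; each statement's English description precedes it below -/
import Mathlib

section
/- Let G = (V,E) be a finite simple graph and let uv ∈ E be a projectable edge of G, i.e., there exists a maximum stable set S of G with S ∩ {u,v} ≠ ∅. Then α(G) = α(G|{u,v}), where G|{u,v} is the clique projection of the clique {u,v}. -/
open Finset

variable {V : Type*}

/-- A stable (independent) set of a graph: pairwise non-adjacent vertices. -/
def IsStable (G : SimpleGraph V) (S : Finset V) : Prop :=
  ∀ u ∈ S, ∀ v ∈ S, ¬ G.Adj u v

/-- The characteristic vectors of stable sets of `G`. -/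
def stableVecs [DecidableEq V] (G : SimpleGraph V) : Set (V → ℝ) :=
  {x | ∃ S : Finset V, IsStable G S ∧ x = fun v => if v ∈ S then (1 : ℝ) else 0}

/-- The stable set polytope `STAB(G)`. -/
def STAB [DecidableEq V] (G : SimpleGraph V) : Set (V → ℝ) :=
  convexHull ℝ (stableVecs G)

/-- `x_W = ∑_{v ∈ W} x_v`. -/
def vsum (W : Finset V) (x : V → ℝ) : ℝ := ∑ v ∈ W, x v

/-- The clique projection `G|W`: add every non-edge `uv` with `W ⊆ N(u) ∪ N(v)`. -/
def cliqueProj (G : SimpleGraph V) (W : Finset V) : SimpleGraph V where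
  Adj u v := G.Adj u v ∨ (u ≠ v ∧ ¬G.Adj u v ∧ ∀ w ∈ W, G.Adj w u ∨ G.Adj w v)
  symm := by
    constructor
    rintro u v (h | ⟨hne, hna, h⟩)
    · exact Or.inl h.symm
    · exact Or.inr ⟨hne.symm, fun h' => hna h'.symm, fun w hw => (h w hw).symm⟩
  loopless := by
    constructor
    rintro u (h | ⟨hne, _, _⟩)
    · exact G.irrefl h
    · exact hne rfl

/-- Iterated projected graphs: `G_0 = G`, `G_t = G_{t-1} | W_t`. -/
def projSeq (G : SimpleGraph V) (W : ℕ → Finset V) : ℕ → SimpleGraph V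
  | 0 => G
  | t + 1 => cliqueProj (projSeq G W t) (W (t + 1))

/-- `F_t = {x ∈ STAB(G) : x_{W_j} = 1, j = 1, …, t}`. -/
def Fface [DecidableEq V] (G : SimpleGraph V) (W : ℕ → Finset V) (t : ℕ) : Set (V → ℝ) :=
  {x ∈ STAB G | ∀ j ∈ Finset.Icc 1 t, vsum (W j) x = 1}

/-- `α(G[H], c)`: the maximum `c`-weight of a stable set of `G` contained in `H`. -/
noncomputable def alphaW (G : SimpleGraph V) (H : Finset V) (c : V → ℝ) : ℝ :=
  sSup {r : ℝ | ∃ S : Finset V, S ⊆ H ∧ IsStable G S ∧ r = ∑ v ∈ S, c v}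

/-- `α(G[H])`: the maximum cardinality of a stable set of `G` contained in `H`. -/
noncomputable def alphaOn (G : SimpleGraph V) (H : Finset V) : ℕ :=
  sSup {k : ℕ | ∃ S : Finset V, S ⊆ H ∧ IsStable G S ∧ S.card = k}

/-- The stability number `α(G)`. -/
noncomputable def alphaNum [Fintype V] (G : SimpleGraph V) : ℕ :=
  sSup {k : ℕ | ∃ S : Finset V, IsStable G S ∧ S.card = k}

/-- `cᵀx`. -/
def dotp [Fintype V] (c x : V → ℝ) : ℝ := ∑ v, c v * x v

/-- The affine dimension of a set of points. -/
noncomputable def affDim (s : Set (V → ℝ)) : ℕ := Module.finrank ℝ (vectorSpan ℝ s)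

/-- Strong hypertree (with hyperedges of size `k`). -/
inductive IsStrongHypertree [DecidableEq V] (k : ℕ) : Finset V → Finset (Finset V) → Prop
  | base (V' : Finset V) : IsStrongHypertree k V' {V'}
  | step (V' : Finset V) (E : Finset (Finset V)) (v : V) (Wi : Finset V) :
      v ∈ V' → v ∈ Wi → Wi ∈ E →
      (∃ Wj ∈ E, Wj ≠ Wi ∧ (Wi ∩ Wj).card = k - 1) →
      IsStrongHypertree k (V'.erase v) (E.erase Wi) →
      IsStrongHypertree k V' E

/-- Condition (I): `|W_t| = k` and the subgraph of `G_{t-1}` induced by `W_1 ∪ ⋯ ∪ W_t`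
is `k`-partite with stable vertex classes `V_t^1, …, V_t^k`. -/
def CondI [DecidableEq V] (G : SimpleGraph V) (W : ℕ → Finset V)
    (Vc : ℕ → ℕ → Finset V) (k t : ℕ) : Prop :=
  (W t).card = k ∧
  (Finset.Icc 1 k).biUnion (Vc t) = (Finset.Icc 1 t).biUnion W ∧
  (∀ i ∈ Finset.Icc 1 k, ∀ j ∈ Finset.Icc 1 k, i ≠ j → Disjoint (Vc t i) (Vc t j)) ∧
  (∀ i ∈ Finset.Icc 1 k, ∀ u ∈ Vc t i, ∀ v ∈ Vc t i, ¬(projSeq G W (t - 1)).Adj u v)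

/-- Condition (II): `T_t = (V_t, {W_1, …, W_t})` is a strong hypertree. -/
def CondII [DecidableEq V] (W : ℕ → Finset V) (Vc : ℕ → ℕ → Finset V) (k t : ℕ) : Prop :=
  IsStrongHypertree k ((Finset.Icc 1 k).biUnion (Vc t)) ((Finset.Icc 1 t).image W)

/-- Condition (III): every `w ∉ V_t` misses some class `V_t^i` in `G_{t-1}`. -/
def CondIII [DecidableEq V] (G : SimpleGraph V) (W : ℕ → Finset V)
    (Vc : ℕ → ℕ → Finset V) (k t : ℕ) : Prop :=
  ∀ w : V, w ∉ (Finset.Icc 1 k).biUnion (Vc t) →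
    ∃ i ∈ Finset.Icc 1 k, ∀ u ∈ Vc t i, ¬(projSeq G W (t - 1)).Adj w u

/-- Condition (IV). -/
def CondIV [Fintype V] [DecidableEq V] (G : SimpleGraph V) (W : ℕ → Finset V)
    (Vc : ℕ → ℕ → Finset V) (k r : ℕ) : Prop :=
  ∀ i ∈ Finset.Icc 1 (k - 1), ∀ t ∈ Finset.Icc 1 r, ∀ v ∈ W t ∩ Vc t i,
    ∀ w ∈ Finset.univ \ (Finset.Icc 1 k).biUnion (Vc r),
      (∃ z ∈ Vc r i, (projSeq G W r).Adj z w) →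
      (G.Adj v w ∨ ∃ t' ∈ Finset.Icc 1 r,
        (projSeq G W (t' - 1)).IsClique (W t : Set V) ∧
        W t ≠ W t' ∧ (W t ∩ W t').card = k - 1 ∧
        v ∉ W t' ∧ ∃ v' ∈ W t' ∩ Vc r i, (projSeq G W (t' - 1)).Adj v' w)

/-- Condition (V): no vertex of `V_t^k` has a neighbor in `V_r^0` in the graph `G_r`. -/
def CondV [Fintype V] [DecidableEq V] (G : SimpleGraph V) (W : ℕ → Finset V)
    (Vc : ℕ → ℕ → Finset V) (k r t : ℕ) : Prop :=
  ∀ v ∈ Vc t k, ∀ w ∈ Finset.univ \ (Finset.Icc 1 k).biUnion (Vc r),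
    ¬(projSeq G W r).Adj v w

/-- `STAB(G[H])`, embedded in `ℝ^V` (coordinates outside `H` are zero). -/
def STABon [DecidableEq V] (G : SimpleGraph V) (H : Finset V) : Set (V → ℝ) :=
  convexHull ℝ
    {x | ∃ S : Finset V, S ⊆ H ∧ IsStable G S ∧ x = fun v => if v ∈ S then (1 : ℝ) else 0}

/-- if `uv ∈ E` is projectable (some maximum stable set meets `{u,v}`),
then `α(G) = α(G|{u,v})`. -/
theorem stmt1 {V : Type*} [Fintype V] [DecidableEq V] (G : SimpleGraph V) (u v : V)
    (huv : G.Adj u v)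
    (hproj : ∃ S : Finset V, IsStable G S ∧ S.card = alphaNum G ∧
      (S ∩ ({u, v} : Finset V)).Nonempty) :
    alphaNum G = alphaNum (cliqueProj G {u, v}) := by
  obtain ⟨S, hS, hcard, hmeet⟩ := hproj
  have hbdd : ∀ (H : SimpleGraph V),
      BddAbove {k : ℕ | ∃ S : Finset V, IsStable H S ∧ S.card = k} := by
    intro H
    refine ⟨Fintype.card V, fun k hk => ?_⟩
    obtain ⟨T, _, rfl⟩ := hk
    exact T.card_le_univ.trans_eq (by simp)
  apply le_antisymm
  · -- S is stable in the projection
    have hS' : IsStable (cliqueProj G {u, v}) S := by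
      intro a ha b hb hab
      rcases hab with h | ⟨hne, hna, hall⟩
      · exact hS a ha b hb h
      · obtain ⟨w, hw⟩ := hmeet
        simp only [Finset.mem_inter, Finset.mem_insert, Finset.mem_singleton] at hw
        have hadj : G.Adj w a ∨ G.Adj w b := by
          rcases hw.2 with rfl | rfl
          · exact hall w (by simp)
          · exact hall w (by simp)
        rcases hadj with h | h
        · exact hS w hw.1 a ha h
        · exact hS w hw.1 b hb h
    rw [← hcard]
    exact le_csSup (hbdd _) ⟨S, hS', rfl⟩
  · -- every stable set of the projection is stable in G
    have hne : {k : ℕ | ∃ S : Finset V, IsStable (cliqueProj G {u, v}) S ∧ S.card = k}.Nonempty :=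
      ⟨0, ∅, fun a ha => absurd ha (by simp), by simp⟩
    apply csSup_le hne
    rintro k ⟨T, hT, rfl⟩
    have hT' : IsStable G T := fun a ha b hb h => hT a ha b hb (Or.inl h)
    exact le_csSup (hbdd _) ⟨T, hT', rfl⟩
end

section
/- Let G = (V,E) be a finite simple graph with n = |V|, let W ⊆ V be a clique of G, and let c ∈ ℝ^V, d ∈ ℝ be such that the inequality cᵀx ≤ d is valid for F_W = {x ∈ STAB(G) : x_W = 1}, with support H = {v ∈ V : c_v ≠ 0}. Then for every λ ∈ ℝ with λ ≤ d − α(G[H \ W], c), the lifted inequality f(x) = (cᵀx − d) − λ(x_W − 1) ≤ 0 is valid for STAB(G). -/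
open Finset

variable {V : Type*}

lemma dotp_smul_add {V : Type*} [Fintype V] (c x y : V → ℝ) (a b : ℝ) :
    dotp c (a • x + b • y) = a * dotp c x + b * dotp c y := by
  simp only [dotp, Pi.add_apply, Pi.smul_apply, smul_eq_mul, Finset.mul_sum,
    ← Finset.sum_add_distrib]
  exact Finset.sum_congr rfl fun v _ => by ring

lemma vsum_smul_add {V : Type*} (W : Finset V) (x y : V → ℝ) (a b : ℝ) :
    vsum W (a • x + b • y) = a * vsum W x + b * vsum W y := by
  simp only [vsum, Pi.add_apply, Pi.smul_apply, smul_eq_mul,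
    Finset.sum_add_distrib, Finset.mul_sum]

/-- the lifting lemma (validity part). -/
theorem stmt2 {V : Type*} [Fintype V] [DecidableEq V] (G : SimpleGraph V)
    (W : Finset V) (hW : G.IsClique (W : Set V)) (c : V → ℝ) (d lam : ℝ)
    (hvalid : ∀ x ∈ STAB G, vsum W x = 1 → dotp c x ≤ d)
    (hlam : lam ≤ d - alphaW G ((Finset.univ.filter fun v => c v ≠ 0) \ W) c) :
    ∀ x ∈ STAB G, (dotp c x - d) - lam * (vsum W x - 1) ≤ 0 := by
  set H : Finset V := (Finset.univ.filter fun v => c v ≠ 0) \ W with hH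
  -- It suffices to check on vertices, since the set is convex
  intro x hx
  have hconv : Convex ℝ {x : V → ℝ | (dotp c x - d) - lam * (vsum W x - 1) ≤ 0} := by
    intro x hx y hy a b ha hb hab
    simp only [Set.mem_setOf_eq] at *
    rw [dotp_smul_add, vsum_smul_add]
    have key : a * dotp c x + b * dotp c y - d - lam * (a * vsum W x + b * vsum W y - 1)
        = a * (dotp c x - d - lam * (vsum W x - 1))
          + b * (dotp c y - d - lam * (vsum W y - 1)) := by
      linear_combination (d - lam) * hab
    rw [key]
    exact add_nonpos (mul_nonpos_of_nonneg_of_nonpos ha hx)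
      (mul_nonpos_of_nonneg_of_nonpos hb hy)
  refine convexHull_min ?_ hconv hx
  rintro z ⟨S, hS, rfl⟩
  simp only [Set.mem_setOf_eq]
  have hz : (fun v => if v ∈ S then (1:ℝ) else 0) ∈ STAB G :=
    subset_convexHull ℝ _ ⟨S, hS, rfl⟩
  have hvs : vsum W (fun v => if v ∈ S then (1:ℝ) else 0) = ((W ∩ S).card : ℝ) := by
    simp [vsum, Finset.sum_ite_mem]
  have hcard : (W ∩ S).card ≤ 1 := by
    by_contra h
    push_neg at h
    obtain ⟨u, hu, v, hv, huv⟩ := Finset.one_lt_card.mp h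
    simp only [Finset.mem_inter] at hu hv
    exact hS u hu.2 v hv.2 (hW hu.1 hv.1 huv)
  interval_cases h : (W ∩ S).card
  · -- x_W = 0 case
    have hWS : W ∩ S = ∅ := Finset.card_eq_zero.mp h
    have hdot : dotp c (fun v => if v ∈ S then (1:ℝ) else 0) = ∑ v ∈ S, c v := by
      simp [dotp, Finset.sum_ite_mem, Finset.univ_inter, mul_ite]
    set S' : Finset V := S.filter (fun v => c v ≠ 0) with hS'
    have hsum : ∑ v ∈ S, c v = ∑ v ∈ S', c v := by
      rw [hS', Finset.sum_filter_of_ne]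
      intro v _ hne
      exact hne
    have hS'H : S' ⊆ H := by
      intro v hv
      rw [hS', Finset.mem_filter] at hv
      rw [hH, Finset.mem_sdiff, Finset.mem_filter]
      refine ⟨⟨Finset.mem_univ v, hv.2⟩, fun hvW => ?_⟩
      have : v ∈ W ∩ S := Finset.mem_inter.mpr ⟨hvW, hv.1⟩
      simp [hWS] at this
    have hS'stable : IsStable G S' := fun u hu v hv =>
      hS u (Finset.filter_subset _ _ hu) v (Finset.filter_subset _ _ hv)
    have hmem : (∑ v ∈ S', c v) ∈
        {r : ℝ | ∃ T : Finset V, T ⊆ H ∧ IsStable G T ∧ r = ∑ v ∈ T, c v} :=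
      ⟨S', hS'H, hS'stable, rfl⟩
    have hbdd : BddAbove {r : ℝ | ∃ T : Finset V, T ⊆ H ∧ IsStable G T ∧ r = ∑ v ∈ T, c v} := by
      apply Set.Finite.bddAbove
      have : {r : ℝ | ∃ T : Finset V, T ⊆ H ∧ IsStable G T ∧ r = ∑ v ∈ T, c v} ⊆
          (fun T : Finset V => ∑ v ∈ T, c v) '' Set.univ := by
        rintro r ⟨T, _, _, rfl⟩
        exact ⟨T, Set.mem_univ _, rfl⟩
      exact Set.Finite.subset (Set.Finite.image _ (Set.finite_univ)) this
    have hle : ∑ v ∈ S', c v ≤ alphaW G H c := le_csSup hbdd hmem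
    rw [hdot, hvs, hsum]
    push_cast
    linarith
  · -- x_W = 1 case
    have := hvalid _ hz (by rw [hvs]; norm_num)
    rw [hvs]
    push_cast
    linarith
end

section
/- Let G = (V,E) be a finite simple graph, let uv ∈ E, let W ⊆ N(u) \ {v} be a set inducing a clique in G, and let G̃ be the graph obtained from G by removing all edges connecting u to vertices in N(u) \ (W ∪ {v}). Then for every H ⊆ V with {u,v} ⊆ H, one has α(G̃|{u,v}[H]) = α(G̃[H]) ≥ α(G[H]); consequently, the rank inequality x_H ≤ α(G̃|{u,v}[H]) is valid for STAB(G). -/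
open Finset

variable {V : Type*}

lemma alphaOn_bdd {V : Type*} (G : SimpleGraph V) (H : Finset V) :
    BddAbove {k : ℕ | ∃ S : Finset V, S ⊆ H ∧ IsStable G S ∧ S.card = k} := by
  refine ⟨H.card, ?_⟩
  rintro k ⟨S, hS, _, rfl⟩
  exact Finset.card_le_card hS

lemma le_alphaOn {V : Type*} {G : SimpleGraph V} {H S : Finset V}
    (hS : S ⊆ H) (hst : IsStable G S) : S.card ≤ alphaOn G H :=
  le_csSup (alphaOn_bdd G H) ⟨S, hS, hst, rfl⟩

lemma alphaOn_le {V : Type*} {G : SimpleGraph V} {H : Finset V} {n : ℕ}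
    (h : ∀ S : Finset V, S ⊆ H → IsStable G S → S.card ≤ n) : alphaOn G H ≤ n := by
  refine csSup_le ⟨0, ∅, Finset.empty_subset H, fun a ha => absurd ha (by simp), by simp⟩ ?_
  rintro k ⟨S, hS, hst, rfl⟩
  exact h S hS hst

lemma isLinearMap_vsum {V : Type*} (H : Finset V) : IsLinearMap ℝ (vsum H) := by
  constructor
  · intro x y; simp [vsum, Finset.sum_add_distrib]
  · intro c x; simp [vsum, Finset.mul_sum]

/-- removing the edges from `u` to `N(u) \ (W ∪ {v})` (where `W` is a
clique inside `N(u) \ {v}`) and projecting `{u,v}` preserves the stability number of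
every induced subgraph containing `u` and `v`; hence the resulting rank inequality is
valid for `STAB(G)`. -/
theorem stmt18 {V : Type*} [Fintype V] [DecidableEq V] (G : SimpleGraph V) (u v : V)
    (huv : G.Adj u v) (W : Finset V)
    (hWsub : ∀ w ∈ W, G.Adj u w ∧ w ≠ v)
    (hWcl : G.IsClique (W : Set V))
    (Gt : SimpleGraph V)
    (hGt : ∀ a b, Gt.Adj a b ↔
      G.Adj a b ∧ ¬(a = u ∧ b ∉ W ∧ b ≠ v) ∧ ¬(b = u ∧ a ∉ W ∧ a ≠ v)) :
    ∀ H : Finset V, u ∈ H → v ∈ H →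
      alphaOn (cliqueProj Gt {u, v}) H = alphaOn Gt H ∧
      alphaOn G H ≤ alphaOn Gt H ∧
      ∀ x ∈ STAB G, vsum H x ≤ (alphaOn (cliqueProj Gt {u, v}) H : ℝ) := by
  intro H hu hv
  -- Gt edges are G edges
  have hGtG : ∀ a b, Gt.Adj a b → G.Adj a b := fun a b h => ((hGt a b).1 h).1
  -- G-stable sets are Gt-stable
  have hstGGt : ∀ S : Finset V, IsStable G S → IsStable Gt S := by
    intro S hS a ha b hb hadj
    exact hS a ha b hb (hGtG a b hadj)
  have hG_le : alphaOn G H ≤ alphaOn Gt H :=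
    alphaOn_le fun S hS hst => le_alphaOn hS (hstGGt S hst)
  -- proj-stable sets are Gt-stable
  have hproj_le : alphaOn (cliqueProj Gt {u, v}) H ≤ alphaOn Gt H := by
    refine alphaOn_le fun S hS hst => le_alphaOn hS ?_
    intro a ha b hb hadj
    exact hst a ha b hb (Or.inl hadj)
  -- key direction
  have hGt_le : alphaOn Gt H ≤ alphaOn (cliqueProj Gt {u, v}) H := by
    refine alphaOn_le fun S hS hst => ?_
    by_cases hstp : IsStable (cliqueProj Gt {u, v}) S
    · exact le_alphaOn hS hstp
    · -- there is a "new edge" inside S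
      simp only [IsStable, not_forall, not_not] at hstp
      obtain ⟨p, hp, q, hq, hadj⟩ := hstp
      have hadj2 : Gt.Adj p q ∨ (p ≠ q ∧ ¬Gt.Adj p q ∧
          ∀ w ∈ ({u, v} : Finset V), Gt.Adj w p ∨ Gt.Adj w q) := hadj
      have hnew : p ≠ q ∧ ¬Gt.Adj p q ∧ ∀ w ∈ ({u, v} : Finset V), Gt.Adj w p ∨ Gt.Adj w q := by
        rcases hadj2 with h | h
        · exact absurd h (hst p hp q hq)
        · exact h
      obtain ⟨hpq, hnpq, hcov⟩ := hnew
      have hcu : Gt.Adj u p ∨ Gt.Adj u q := hcov u (by simp)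
      have hcv : Gt.Adj v p ∨ Gt.Adj v q := hcov v (by simp)
      -- u ∉ S and v ∉ S
      have huS : u ∉ S := by
        intro huS
        rcases hcu with h | h
        · exact hst u huS p hp h
        · exact hst u huS q hq h
      have hvS : v ∉ S := by
        intro hvS
        rcases hcv with h | h
        · exact hst v hvS p hp h
        · exact hst v hvS q hq h
      -- get a ∈ S with Gt.Adj u a, and then a ∈ W
      obtain ⟨a, haS, hua⟩ : ∃ a ∈ S, Gt.Adj u a := by
        rcases hcu with h | h
        · exact ⟨p, hp, h⟩
        · exact ⟨q, hq, h⟩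
      have haW : a ∈ W := by
        have := ((hGt u a).1 hua).2.1
        by_contra haW
        have hav : a ≠ v := fun h => hvS (h ▸ haS)
        exact this ⟨rfl, haW, hav⟩
      -- u is not adjacent to any other element of S
      have hkey : ∀ y ∈ S, y ≠ a → ¬Gt.Adj u y := by
        intro y hyS hya huy
        have hy' := ((hGt u y).1 huy).2.1
        have hyW : y ∈ W := by
          by_contra hyW
          have hyv : y ≠ v := fun h => hvS (h ▸ hyS)
          exact hy' ⟨rfl, hyW, hyv⟩
        -- a and y are both in the clique W, hence Gt-adjacent, contradicting stability
        have hGay : G.Adj a y := hWcl haW hyW (Ne.symm hya)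
        have hau : a ≠ u := fun h => G.loopless.irrefl u (h ▸ (hWsub a haW).1)
        have hyu : y ≠ u := fun h => G.loopless.irrefl u (h ▸ (hWsub y hyW).1)
        have : Gt.Adj a y := (hGt a y).2 ⟨hGay, fun h => hau h.1, fun h => hyu h.1⟩
        exact hst a haS y hyS this
      -- replacement set
      set S' : Finset V := insert u (S.erase a) with hS'
      have huSe : u ∉ S.erase a := fun h => huS (Finset.mem_of_mem_erase h)
      have hcard : S'.card = S.card := by
        rw [hS', Finset.card_insert_of_notMem huSe, Finset.card_erase_of_mem haS]
        have : 1 ≤ S.card := Finset.card_pos.2 ⟨a, haS⟩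
        omega
      have hS'H : S' ⊆ H := by
        intro x hx
        rcases Finset.mem_insert.1 hx with rfl | hx
        · exact hu
        · exact hS (Finset.mem_of_mem_erase hx)
      -- u not Gt-adjacent to anything in S.erase a
      have hkey' : ∀ y ∈ S.erase a, ¬Gt.Adj u y := by
        intro y hy
        exact hkey y (Finset.mem_of_mem_erase hy) (Finset.ne_of_mem_erase hy)
      -- S' is stable in the projection
      have hstS' : IsStable (cliqueProj Gt {u, v}) S' := by
        intro x hx y hy hadj'
        have hx' := Finset.mem_insert.1 hx
        have hy' := Finset.mem_insert.1 hy
        have hadj2' : Gt.Adj x y ∨ (x ≠ y ∧ ¬Gt.Adj x y ∧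
            ∀ w ∈ ({u, v} : Finset V), Gt.Adj w x ∨ Gt.Adj w y) := hadj'
        rcases hadj2' with h | ⟨hne, hna, hcov'⟩
        · -- Gt edge inside S'
          rcases hx' with hxu | hx' <;> rcases hy' with hyu | hy'
          · rw [hxu, hyu] at h; exact Gt.loopless.irrefl u h
          · rw [hxu] at h; exact hkey' y hy' h
          · rw [hyu] at h; exact hkey' x hx' h.symm
          · exact hst x (Finset.mem_of_mem_erase hx') y (Finset.mem_of_mem_erase hy') h
        · -- new edge inside S': u must be covered
          have hcu' : Gt.Adj u x ∨ Gt.Adj u y := hcov' u (by simp)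
          rcases hcu' with h | h
          · rcases hx' with hxu | hx''
            · rw [hxu] at h; exact Gt.loopless.irrefl u h
            · exact hkey' x hx'' h
          · rcases hy' with hyu | hy''
            · rw [hyu] at h; exact Gt.loopless.irrefl u h
            · exact hkey' y hy'' h
      calc S.card = S'.card := hcard.symm
        _ ≤ _ := le_alphaOn hS'H hstS'
  have heq : alphaOn (cliqueProj Gt {u, v}) H = alphaOn Gt H :=
    le_antisymm hproj_le hGt_le
  refine ⟨heq, hG_le, ?_⟩
  -- validity for STAB(G)
  intro x hx
  have hconv : Convex ℝ {y : V → ℝ | vsum H y ≤ (alphaOn (cliqueProj Gt {u, v}) H : ℝ)} :=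
    convex_halfSpace_le (isLinearMap_vsum H) _
  have hsub : stableVecs G ⊆ {y : V → ℝ | vsum H y ≤ (alphaOn (cliqueProj Gt {u, v}) H : ℝ)} := by
    rintro y ⟨S, hst, rfl⟩
    have h1 : vsum H (fun v => if v ∈ S then (1 : ℝ) else 0) = ((H ∩ S).card : ℝ) := by
      simp [vsum, Finset.sum_ite_mem]
    have h2 : (H ∩ S).card ≤ alphaOn (cliqueProj Gt {u, v}) H := by
      have hsubH : H ∩ S ⊆ H := Finset.inter_subset_left
      have hstHS : IsStable G (H ∩ S) := fun a ha b hb =>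
        hst a (Finset.mem_inter.1 ha).2 b (Finset.mem_inter.1 hb).2
      calc (H ∩ S).card ≤ alphaOn G H := le_alphaOn hsubH hstHS
        _ ≤ alphaOn Gt H := hG_le
        _ = alphaOn (cliqueProj Gt {u, v}) H := heq.symm
    simp only [Set.mem_setOf_eq, h1]
    exact_mod_cast h2
  exact convexHull_min hsub hconv hx
end
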